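/- Let X be a metric space, x ∈ X, and U : ℕ → Set X a sequence of subsets such that x belongs to the interior of each U_k, the closure of U_{k+1} is contained in the interior of U_k for each k, and ⋂_k U_k = {x}. Let W = ⋃_k (U_k × [k, k+1)) ⊆ X × ℝ, and let A = {(y,t) ∈ X × ℝ : t ≥ 0 and (y,t) ∉ W}, with the subspace topology from X × ℝ. Then the restriction to A of the first-coordinate projection X × ℝ → X is a well-defined continuous map h : A → X \ {x}, and h is a homotopy equivalence: there exists a continuous map g : X \ {x} → A with g ∘ h homotopic to the identity of A and h ∘ g homotopic to the identity of X \ {x}. -/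

import Mathlib

/-- The projection of `X × [0,∞)` minus the staircase neighborhood
`W = ⋃ₖ Uₖ × [k, k+1)` onto `X \ {x}` is well defined and is a homotopy
equivalence. -/
theorem stmt_4 (X : Type*) [MetricSpace X] (x : X) (U : ℕ → Set X)
    (hx : ∀ k, x ∈ interior (U k))
    (hcl : ∀ k, closure (U (k + 1)) ⊆ interior (U k))
    (hint : (⋂ k, U k) = {x})
    (W : Set (X × ℝ)) (hW : W = ⋃ k, (U k) ×ˢ (Set.Ico (k : ℝ) ((k : ℝ) + 1)))
    (A : Set (X × ℝ)) (hA : A = {p : X × ℝ | 0 ≤ p.2 ∧ p ∉ W}) :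
    (∀ p ∈ A, p.1 ≠ x) ∧
    ∃ h : C(A, ({x}ᶜ : Set X)),
      (∀ a : A, (h a : X) = ((a : X × ℝ)).1) ∧
      ∃ g : C(({x}ᶜ : Set X), A),
        (g.comp h).Homotopic (ContinuousMap.id A) ∧
        (h.comp g).Homotopic (ContinuousMap.id ({x}ᶜ : Set X)) := by
  -- U is antitone
  have hUa : Antitone U := antitone_nat_of_succ_le fun k =>
    (subset_closure.trans ((hcl k).trans interior_subset))
  -- Urysohn functions
  have hFex : ∀ k : ℕ, ∃ f : C(X, ℝ), Set.EqOn f 0 (interior (U k))ᶜ ∧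
      Set.EqOn f 1 (closure (U (k + 1))) ∧ ∀ y, f y ∈ Set.Icc (0:ℝ) 1 := by
    intro k
    refine exists_continuous_zero_one_of_isClosed isOpen_interior.isClosed_compl
      isClosed_closure ?_
    rw [Set.disjoint_left]
    exact fun y hy hy2 => hy (hcl k hy2)
  choose F hF0 hF1 hF01 using hFex
  set φ : X → ℝ := fun y => 1 + ∑' k, F k y with hφdef
  have hFz : ∀ (y : X) (k m : ℕ), y ∉ U m → m ≤ k → F k y = 0 := by
    intro y k m hy hmk
    exact hF0 k (fun h => hy (hUa hmk (interior_subset h)))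
  have hFo : ∀ (y : X) (k m : ℕ), y ∈ U m → k + 1 ≤ m → F k y = 1 := by
    intro y k m hy hkm
    exact hF1 k (subset_closure (hUa hkm hy))
  have hex : ∀ y : X, y ≠ x → ∃ n, y ∉ U n := by
    intro y hy
    by_contra h
    push_neg at h
    exact hy (by
      have : y ∈ ⋂ k, U k := Set.mem_iInter.mpr h
      rwa [hint] at this)
  have htsum : ∀ (y : X) (n : ℕ), y ∉ U n →
      ∑' k, F k y = ∑ k ∈ Finset.range n, F k y := by
    intro y n hy
    exact tsum_eq_sum fun k hk => hFz y k n hy (by simpa using hk)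
  have phi0 : ∀ y, 0 ≤ φ y := by
    intro y
    have : 0 ≤ ∑' k, F k y := tsum_nonneg (fun k => (hF01 k y).1)
    simp only [hφdef]
    linarith
  have phi_ge : ∀ (y : X) (m : ℕ), y ≠ x → y ∈ U m → (m:ℝ) + 1 ≤ φ y := by
    intro y m hy hym
    obtain ⟨n, hn⟩ := hex y hy
    have hmn : m < n := by
      by_contra h
      push_neg at h
      exact hn (hUa h hym)
    have hsum : ∑ k ∈ Finset.range m, F k y = (m:ℝ) := by
      rw [Finset.sum_congr rfl (fun k hk => hFo y k m hym (Finset.mem_range.mp hk))]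
      simp
    have hle : ∑ k ∈ Finset.range m, F k y ≤ ∑ k ∈ Finset.range n, F k y :=
      Finset.sum_le_sum_of_subset_of_nonneg
        (Finset.range_subset_range.mpr hmn.le) (fun k _ _ => (hF01 k y).1)
    have := htsum y n hn
    simp only [hφdef]
    rw [this]
    linarith
  -- continuity on {x}ᶜ
  have hφc : ContinuousOn φ ({x}ᶜ : Set X) := by
    intro y hy
    obtain ⟨n, hn⟩ := hex y hy
    have hncl : y ∉ closure (U (n + 1)) := fun h => hn (interior_subset (hcl n h))
    have hV : (closure (U (n + 1)))ᶜ ∈ nhds y :=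
      isClosed_closure.isOpen_compl.mem_nhds hncl
    have heq : ∀ z ∈ (closure (U (n + 1)))ᶜ,
        φ z = 1 + ∑ k ∈ Finset.range (n + 1), F k z := by
      intro z hz
      have hz' : z ∉ U (n + 1) := fun h => hz (subset_closure h)
      simp only [hφdef]
      rw [htsum z (n + 1) hz']
    have hca : ContinuousAt (fun z => 1 + ∑ k ∈ Finset.range (n + 1), F k z) y := by
      refine Continuous.continuousAt ?_
      exact continuous_const.add (continuous_finset_sum _ fun k _ => (F k).continuous)
    refine (hca.congr ?_).continuousWithinAt
    filter_upwards [hV] with z hz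
    exact (heq z hz).symm
  -- 0 ≤ t, t ∉ bad set for y, u between t and φ y implies membership in A
  have hmemA : ∀ (y : X) (t u : ℝ), y ≠ x → 0 ≤ t → (y, t) ∉ W →
      min t (φ y) ≤ u → u ≤ max t (φ y) → (y, u) ∈ A := by
    intro y t u hy ht hw hmin hmax
    rw [hA]
    refine ⟨le_trans (le_min ht (phi0 y)) hmin, ?_⟩
    rw [hW, Set.mem_iUnion]
    rintro ⟨m, hm⟩
    rw [Set.mem_prod] at hm
    obtain ⟨hym, hum⟩ := hm
    have hphige := phi_ge y m hy hym
    have hult : u < (m:ℝ) + 1 := hum.2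
    have htu : t ≤ u := by
      rcases le_total t (φ y) with h | h
      · calc t = min t (φ y) := (min_eq_left h).symm
          _ ≤ u := hmin
      · exfalso
        have : φ y ≤ u := le_trans (by rw [min_eq_right h]) hmin
        linarith
    apply hw
    rw [hW, Set.mem_iUnion]
    refine ⟨⌊t⌋₊, ?_⟩
    rw [Set.mem_prod]
    constructor
    · refine hUa ?_ hym
      have : (⌊t⌋₊ : ℝ) ≤ t := Nat.floor_le ht
      have h2 : (⌊t⌋₊ : ℝ) < (m:ℝ) + 1 := by linarith
      exact_mod_cast Nat.lt_succ_iff.mp (by exact_mod_cast h2)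
    · exact ⟨Nat.floor_le ht, Nat.lt_floor_add_one t⟩
  have hgmem : ∀ y : X, y ≠ x → (y, φ y) ∈ A := by
    intro y hy
    rw [hA]
    refine ⟨phi0 y, ?_⟩
    rw [hW, Set.mem_iUnion]
    rintro ⟨m, hm⟩
    rw [Set.mem_prod] at hm
    have := phi_ge y m hy hm.1
    have := hm.2.2
    linarith
  -- part 1
  have hA1 : ∀ p ∈ A, p.1 ≠ x := by
    intro p hp heq
    rw [hA] at hp
    obtain ⟨ht, hw⟩ := hp
    apply hw
    rw [hW, Set.mem_iUnion]
    refine ⟨⌊p.2⌋₊, ?_⟩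
    rw [Set.mem_prod]
    exact ⟨by rw [heq]; exact interior_subset (hx _),
      ⟨Nat.floor_le ht, Nat.lt_floor_add_one _⟩⟩
  refine ⟨hA1, ?_⟩
  -- construction of h
  refine ⟨⟨fun a => ⟨(a : X × ℝ).1, hA1 a a.2⟩,
    ((continuous_fst.comp continuous_subtype_val).subtype_mk _)⟩, fun a => rfl, ?_⟩
  -- construction of g
  have hgc : Continuous fun y : ({x}ᶜ : Set X) =>
      (⟨((y : X), φ (y : X)), hgmem y y.2⟩ : A) := by
    refine Continuous.subtype_mk ?_ _
    exact continuous_subtype_val.prodMk (hφc.restrict)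
  refine ⟨⟨_, hgc⟩, ?_, ?_⟩
  · -- g ∘ h ≃ id
    constructor
    refine ContinuousMap.Homotopy.mk
      ⟨fun p => ⟨(((p.2 : A) : X × ℝ).1,
        (1 - (p.1 : ℝ)) * φ ((p.2 : A) : X × ℝ).1 + (p.1 : ℝ) * ((p.2 : A) : X × ℝ).2),
        ?_⟩, ?_⟩ ?_ ?_
    · -- membership
      obtain ⟨s, a⟩ := p
      obtain ⟨⟨y, t⟩, ha⟩ := a
      have hy : y ≠ x := hA1 _ ha
      have ha' := ha
      rw [hA] at ha'
      obtain ⟨ht, hw⟩ := ha'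
      have hs0 : (0:ℝ) ≤ s := s.2.1
      have hs1 : (s:ℝ) ≤ 1 := s.2.2
      refine hmemA y t _ hy ht hw ?_ ?_
      · rcases le_total t (φ y) with h | h
        · rw [min_eq_left h]; nlinarith
        · rw [min_eq_right h]; nlinarith
      · rcases le_total t (φ y) with h | h
        · rw [max_eq_right h]; nlinarith
        · rw [max_eq_left h]; nlinarith
    · -- continuity
      refine Continuous.subtype_mk ?_ _
      have hc1 : Continuous fun p : (unitInterval × A) => ((p.2 : X × ℝ)).1 :=
        continuous_fst.comp (continuous_subtype_val.comp continuous_snd)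
      have hc2 : Continuous fun p : (unitInterval × A) => φ ((p.2 : X × ℝ)).1 :=
        hφc.comp_continuous hc1 (fun p => hA1 _ p.2.2)
      have hc3 : Continuous fun p : (unitInterval × A) => (p.1 : ℝ) :=
        continuous_subtype_val.comp continuous_fst
      have hc4 : Continuous fun p : (unitInterval × A) => ((p.2 : X × ℝ)).2 :=
        continuous_snd.comp (continuous_subtype_val.comp continuous_snd)
      exact hc1.prodMk (((continuous_const.sub hc3).mul hc2).add (hc3.mul hc4))
    · -- at 0
      intro a
      ext <;> simp
    · -- at 1
      intro a
      ext <;> simp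
  · -- h ∘ g = id
    have : (ContinuousMap.mk (fun a : A => (⟨(a : X × ℝ).1, hA1 a a.2⟩ : ({x}ᶜ : Set X)))
        ((continuous_fst.comp continuous_subtype_val).subtype_mk _)).comp
        (ContinuousMap.mk _ hgc) = ContinuousMap.id ({x}ᶜ : Set X) := by
      ext y
      rfl
    rw [this]
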